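/- Let A be a noetherian commutative ring and M an A-module whose associated prime ideals are pairwise disjoint (P + Q = A for distinct associated primes P, Q); for instance, any meager A-module. For each associated prime P let M(P) = {m ∈ M : P^n m = 0 for some n ≥ 1}. Then M is the internal direct sum of the submodules M(P) over the associated primes P of M (the family (M(P)) is independent and its supremum is M), and for each associated prime P one has Asso_A(M(P)) = {P}. -/

import Mathlib

/-- The `P`-primary component `M(P) = {m ∈ M : P^n m = 0 for some n ≥ 1}` of a module. -/
def primaryComponent (A : Type u) [CommRing A]
    (M : Type v) [AddCommGroup M] [Module A M] (P : Ideal A) : Submodule A M :=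
  ⨆ n : ℕ, Submodule.torsionBySet A M ((P ^ (n + 1) : Ideal A) : Set A)

section Aux

variable {A : Type u} [CommRing A] {M : Type v} [AddCommGroup M] [Module A M]

theorem annSpanCoe {N : Submodule A M} (z : N) :
    (Submodule.span A {z}).annihilator = (Submodule.span A {(z : M)}).annihilator := by
  ext c
  rw [Submodule.mem_annihilator_span_singleton, Submodule.mem_annihilator_span_singleton,
    ← ZeroMemClass.coe_eq_zero, SetLike.val_smul]

theorem colon_bot_eq_ann (x : M) :
    (⊥ : Submodule A M).colon {x} = (Submodule.span A {x}).annihilator := by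
  ext c
  rw [Submodule.mem_colon_singleton, Submodule.mem_bot, Submodule.mem_annihilator_span_singleton]

theorem mem_asso_iff [IsNoetherianRing A] {P : Ideal A} :
    P ∈ associatedPrimes A M ↔ P.IsPrime ∧ ∃ x : M, P = (Submodule.span A {x}).annihilator := by
  rw [AssociatedPrimes.mem_iff, isAssociatedPrime_iff]
  simp_rw [colon_bot_eq_ann]

/-- The associated primes of a submodule `N`, computed in the ambient module `M`. -/
def apIn (N : Submodule A M) : Set (Ideal A) :=
  {P : Ideal A | P.IsPrime ∧ ∃ y ∈ N, P = (Submodule.span A {y}).annihilator}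

theorem asso_subset_apIn [IsNoetherianRing A] (N : Submodule A M) :
    associatedPrimes A N ⊆ apIn N := by
  rintro P hP
  obtain ⟨hp, z, hz⟩ := mem_asso_iff.mp hP
  exact ⟨hp, z, z.2, hz.trans (annSpanCoe z)⟩

theorem apIn_subset_asso [IsNoetherianRing A] (N : Submodule A M) :
    apIn N ⊆ associatedPrimes A M := by
  rintro P ⟨hp, y, _, hy⟩
  exact mem_asso_iff.mpr ⟨hp, y, hy⟩

/-- If `a` lies in every associated prime of the cyclic module `A∙x`, then `a` acts
nilpotently on `x`. -/
theorem aux_nilpotent [IsNoetherianRing A] (x : M) (a : A)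
    (h : ∀ P ∈ apIn (Submodule.span A {x}), a ∈ P) :
    ∃ n : ℕ, a ^ n • x = 0 := by
  have hmono : Monotone (fun n : ℕ => (Submodule.span A {a ^ n • x}).annihilator) := by
    apply monotone_nat_of_le_succ
    intro n c hc
    rw [Submodule.mem_annihilator_span_singleton] at hc ⊢
    rw [pow_succ', mul_smul, smul_comm, hc, smul_zero]
  set f : ℕ →o Ideal A := ⟨fun n => (Submodule.span A {a ^ n • x}).annihilator, hmono⟩ with hf
  obtain ⟨n₀, hn₀⟩ := monotone_stabilizes_iff_noetherian.mpr inferInstance f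
  by_cases hy : a ^ n₀ • x = 0
  · exact ⟨n₀, hy⟩
  set y := a ^ n₀ • x with hydef
  haveI : Nontrivial ↥(Submodule.span A {y}) :=
    ⟨⟨⟨y, Submodule.mem_span_singleton_self y⟩, 0, by
      simp only [ne_eq, Submodule.mk_eq_zero]; exact hy⟩⟩
  obtain ⟨P, hP⟩ := associatedPrimes.nonempty A ↥(Submodule.span A {y})
  obtain ⟨hPp, z, hzmem, hz⟩ := asso_subset_apIn _ hP
  have hyx : Submodule.span A {y} ≤ Submodule.span A {x} := by
    rw [Submodule.span_le, Set.singleton_subset_iff]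
    exact Submodule.smul_mem _ _ (Submodule.mem_span_singleton_self x)
  have haP : a ∈ P := h P ⟨hPp, z, hyx hzmem, hz⟩
  obtain ⟨c, hc⟩ := Submodule.mem_span_singleton.mp hzmem
  have haz : a • z = 0 := by
    rwa [hz, Submodule.mem_annihilator_span_singleton] at haP
  have hc' : c ∈ f (n₀ + 1) := by
    show c ∈ (Submodule.span A {a ^ (n₀ + 1) • x}).annihilator
    rw [Submodule.mem_annihilator_span_singleton, pow_succ', mul_smul, ← hydef,
      smul_comm c a, hc, haz]
  have hcy : c • y = 0 := by
    rw [← hn₀ (n₀ + 1) (Nat.le_succ _)] at hc'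
    have : c ∈ (Submodule.span A {a ^ n₀ • x}).annihilator := hc'
    rwa [Submodule.mem_annihilator_span_singleton, ← hydef] at this
  rw [hcy] at hc
  rw [← hc, Submodule.span_zero_singleton, Submodule.annihilator_bot] at hz
  exact absurd hz hPp.ne_top

/-- The set of associated primes of a cyclic module over a noetherian ring is finite. -/
theorem apIn_span_finite [IsNoetherianRing A] (x : M) :
    (apIn (Submodule.span A {x})).Finite := by
  set N := Submodule.span A {x} with hN
  haveI : IsNoetherian A ↥N :=
    isNoetherian_of_fg_of_noetherian N (Submodule.fg_span_singleton x)
  have hmax := set_has_maximal_iff_noetherian.mpr (inferInstance : IsNoetherian A ↥N)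
  have hbot : (apIn ((⊥ : Submodule A ↥N).map N.subtype)).Finite := by
    apply Set.Finite.subset Set.finite_empty
    rintro P ⟨hp, y, hy, hann⟩
    rw [Submodule.map_bot, Submodule.mem_bot] at hy
    subst hy
    rw [Submodule.span_zero_singleton, Submodule.annihilator_bot] at hann
    exact absurd hann hp.ne_top
  obtain ⟨W₀, hW₀, hW₀max⟩ :=
    hmax {W : Submodule A ↥N | (apIn (W.map N.subtype)).Finite} ⟨⊥, hbot⟩
  simp only [Set.mem_setOf_eq] at hW₀
  by_cases htop : W₀ = ⊤
  · rw [htop, Submodule.map_subtype_top] at hW₀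
    exact hW₀
  exfalso
  haveI : Nontrivial (↥N ⧸ W₀) :=
    Submodule.Quotient.nontrivial_iff.mpr htop
  obtain ⟨P, hP⟩ := associatedPrimes.nonempty A (↥N ⧸ W₀)
  obtain ⟨hPp, zb, hzb⟩ := mem_asso_iff.mp hP
  obtain ⟨z, rfl⟩ := Submodule.Quotient.mk_surjective W₀ zb
  have hPmem : ∀ c : A, c ∈ P ↔ c • z ∈ W₀ := by
    intro c
    rw [hzb, Submodule.mem_annihilator_span_singleton, ← Submodule.Quotient.mk_smul,
      Submodule.Quotient.mk_eq_zero]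
  have hzW₀ : z ∉ W₀ := by
    intro hz
    exact hPp.ne_top ((Ideal.eq_top_iff_one _).mpr ((hPmem 1).mpr (by rwa [one_smul])))
  set W₁ : Submodule A ↥N := W₀ ⊔ Submodule.span A {z} with hW₁
  have hzW₁ : z ∈ W₁ := Submodule.mem_sup_right (Submodule.mem_span_singleton_self z)
  have hlt : W₀ < W₁ := lt_of_le_of_ne le_sup_left (fun e => hzW₀ (by rw [e]; exact hzW₁))
  refine hW₀max W₁ (Set.mem_setOf_eq ▸ ?_) hlt
  have hsub : apIn (W₁.map N.subtype) ⊆ insert P (apIn (W₀.map N.subtype)) := by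
    rintro Q ⟨hQp, y, hy, hQann⟩
    obtain ⟨w, hw, rfl⟩ := hy
    simp only [Submodule.subtype_apply] at hQann ⊢
    have key : ∀ e : A, e ∈ Q ↔ e • (w : M) = 0 := fun e => by
      rw [hQann, Submodule.mem_annihilator_span_singleton]
    rw [Set.mem_insert_iff]
    by_cases hcase : ∃ c : A, c • (w : M) ∈ W₀.map N.subtype ∧ c • (w : M) ≠ 0
    · obtain ⟨c, hcW, hc0⟩ := hcase
      right
      have hcQ : c ∉ Q := fun hcQ => hc0 ((key c).mp hcQ)
      refine ⟨hQp, c • (w : M), hcW, ?_⟩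
      ext d
      rw [Submodule.mem_annihilator_span_singleton, smul_smul, ← key (d * c)]
      constructor
      · intro hd
        exact Ideal.mul_mem_right c _ hd
      · intro hdc
        exact (hQp.mem_or_mem hdc).resolve_right hcQ
    · push_neg at hcase
      left
      obtain ⟨u, hu, v, hv, huv⟩ := Submodule.mem_sup.mp (hW₁ ▸ hw)
      obtain ⟨c, hc⟩ := Submodule.mem_span_singleton.mp hv
      have hwdecomp : w = u + c • z := by rw [← huv, hc]
      have hPc : ∀ d : A, d • w ∈ W₀ ↔ d * c ∈ P := by
        intro d
        have h1 : d • w = d • u + (d * c) • z := by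
          rw [hwdecomp, smul_add, smul_smul]
        constructor
        · intro hdw
          have h2 : (d * c) • z ∈ W₀ := by
            have h3 := W₀.sub_mem hdw (W₀.smul_mem d hu)
            rwa [h1, add_sub_cancel_left] at h3
          exact (hPmem _).mpr h2
        · intro hdc
          rw [h1]
          exact W₀.add_mem (W₀.smul_mem d hu) ((hPmem _).mp hdc)
      by_cases hcP : c ∈ P
      · exfalso
        have hwW₀ : w ∈ W₀ := by
          have := (hPc 1).mpr (by rwa [one_mul])
          rwa [one_smul] at this
        have hy0 : (w : M) = 0 := by
          have h4 : (1 : A) • (w : M) ∈ W₀.map N.subtype := by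
            rw [one_smul]; exact ⟨w, hwW₀, rfl⟩
          have := hcase 1 h4
          rwa [one_smul] at this
        exact hQp.ne_top
          (by rw [hQann, hy0, Submodule.span_zero_singleton, Submodule.annihilator_bot])
      · -- Q = P
        ext d
        rw [key d]
        constructor
        · intro hd
          have hdw : d • w = 0 := by
            rwa [← ZeroMemClass.coe_eq_zero, SetLike.val_smul]
          have : d * c ∈ P := (hPc d).mp (by rw [hdw]; exact W₀.zero_mem)
          exact (hPp.mem_or_mem this).resolve_right hcP
        · intro hd
          have hdw : d • w ∈ W₀ := (hPc d).mpr (Ideal.mul_mem_right c _ hd)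
          have h5 : d • (w : M) ∈ W₀.map N.subtype := ⟨d • w, hdw, rfl⟩
          exact hcase d h5
  exact Set.Finite.subset (hW₀.insert P) hsub

theorem inf_eq_prod_of_coprime {ι : Type*} (s : Finset ι) (f : ι → Ideal A)
    (h : (s : Set ι).Pairwise fun i j => f i ⊔ f j = ⊤) :
    (⨅ i ∈ s, f i) = ∏ i ∈ s, f i := by
  classical
  induction s using Finset.induction_on with
  | empty => simp [Ideal.one_eq_top]
  | @insert a s ha ih =>
    rw [Finset.prod_insert ha]
    have hpair : (s : Set ι).Pairwise fun i j => f i ⊔ f j = ⊤ :=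
      h.mono (by exact_mod_cast Finset.subset_insert a s)
    have hco : IsCoprime (f a) (∏ i ∈ s, f i) :=
      IsCoprime.prod_right fun i hi =>
        Ideal.isCoprime_iff_sup_eq.mpr
          (h (Finset.mem_insert_self a s) (Finset.mem_insert_of_mem hi)
            (fun e => ha (e ▸ hi)))
    rw [Ideal.mul_eq_inf_of_coprime hco.sup_eq, ← ih hpair]
    simp [iInf_or, iInf_inf_eq, iInf_iInf_eq_left]

theorem primaryComponent_mono (P : Ideal A) :
    Monotone fun n : ℕ => Submodule.torsionBySet A M ((P ^ (n + 1) : Ideal A) : Set A) :=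
  fun m n hmn =>
    Submodule.torsionBySet_le_torsionBySet_of_subset
      (SetLike.coe_subset_coe.mpr (Ideal.pow_le_pow_right (by omega)))

theorem mem_primaryComponent_iff {P : Ideal A} {x : M} :
    x ∈ primaryComponent A M P ↔ ∃ n : ℕ, ∀ a ∈ P ^ (n + 1), a • x = 0 := by
  rw [primaryComponent,
    Submodule.mem_iSup_of_directed _ (primaryComponent_mono P).directed_le]
  constructor
  · rintro ⟨n, hn⟩
    exact ⟨n, fun a ha => (Submodule.mem_torsionBySet_iff _ _).mp hn ⟨a, ha⟩⟩
  · rintro ⟨n, hn⟩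
    exact ⟨n, (Submodule.mem_torsionBySet_iff _ _).mpr fun a => hn a a.2⟩

end Aux

/-- Let `A` be a noetherian commutative ring and `M` an `A`-module whose associated primes
are pairwise disjoint (`P ⊔ Q = A` for distinct associated primes, e.g. `M` meager).  Then
`M` is the internal direct sum of the submodules `M(P)` over its associated primes (the
family is independent with supremum `M`), and `Asso_A(M(P)) = {P}` for each associated
prime `P`. -/
theorem directSum_primaryComponents_of_pairwise_disjoint
    (A : Type u) [CommRing A] [IsNoetherianRing A]
    (M : Type v) [AddCommGroup M] [Module A M]
    (hdisj : ∀ P ∈ associatedPrimes A M, ∀ Q ∈ associatedPrimes A M,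
      P ≠ Q → P ⊔ Q = ⊤) :
    iSupIndep (fun P : associatedPrimes A M => primaryComponent A M (P : Ideal A)) ∧
      (⨆ P : associatedPrimes A M, primaryComponent A M (P : Ideal A)) = ⊤ ∧
      ∀ P ∈ associatedPrimes A M,
        associatedPrimes A (primaryComponent A M P) = {P} := by
  classical
  have hQcop : ∀ P ∈ associatedPrimes A M, ∀ Q ∈ associatedPrimes A M, P ≠ Q →
      ∀ m n : ℕ, P ^ m ⊔ Q ^ n = ⊤ := by
    intro P hP Q hQ hne m n
    exact ((Ideal.isCoprime_iff_sup_eq.mpr (hdisj P hP Q hQ hne)).pow).sup_eq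
  -- Part 1 : independence
  have hindep :
      iSupIndep (fun P : associatedPrimes A M => primaryComponent A M (P : Ideal A)) := by
    intro i
    rw [Submodule.disjoint_def]
    intro x hxi hxrest
    obtain ⟨n, hn⟩ := mem_primaryComponent_iff.mp hxi
    rw [iSup_subtype'] at hxrest
    have key : ∃ J : Ideal A, J ⊔ (i : Ideal A) ^ (n + 1) = ⊤ ∧ ∀ a ∈ J, a • x = 0 := by
      refine Submodule.iSup_induction
        (motive := fun y : M =>
          ∃ J : Ideal A, J ⊔ (i : Ideal A) ^ (n + 1) = ⊤ ∧ ∀ a ∈ J, a • y = 0)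
        _ hxrest ?_ ?_ ?_
      · rintro ⟨j, hji⟩ y hy
        obtain ⟨m, hm⟩ := mem_primaryComponent_iff.mp hy
        exact ⟨(j : Ideal A) ^ (m + 1),
          hQcop j j.2 i i.2 (fun e => hji (Subtype.ext e)) _ _, hm⟩
      · exact ⟨⊤, by simp, fun a _ => smul_zero a⟩
      · rintro y z ⟨J₁, h₁s, h₁⟩ ⟨J₂, h₂s, h₂⟩
        refine ⟨J₁ * J₂, ?_, ?_⟩
        · exact ((Ideal.isCoprime_iff_sup_eq.mpr h₁s).mul_left
            (Ideal.isCoprime_iff_sup_eq.mpr h₂s)).sup_eq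
        · intro a ha
          rw [smul_add, h₁ a (Ideal.mul_le_left ha), h₂ a (Ideal.mul_le_right ha), add_zero]
    obtain ⟨J, hJs, hJ⟩ := key
    obtain ⟨a, haJ, b, hbP, hab⟩ := Submodule.mem_sup.mp
      (hJs ▸ Submodule.mem_top : (1 : A) ∈ J ⊔ (i : Ideal A) ^ (n + 1))
    have : (a + b) • x = 0 := by rw [add_smul, hJ a haJ, hn b hbP, add_zero]
    rwa [hab, one_smul] at this
  -- Part 2 : the sup is everything
  have hsup : (⨆ P : associatedPrimes A M, primaryComponent A M (P : Ideal A)) = ⊤ := by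
    rw [eq_top_iff]
    intro x _
    have hfin := apIn_span_finite (A := A) x
    set T := hfin.toFinset with hT
    have hTmem : ∀ P ∈ T, P ∈ apIn (Submodule.span A {x}) :=
      fun P hP => hfin.mem_toFinset.mp hP
    have hTasso : ∀ P ∈ T, P ∈ associatedPrimes A M :=
      fun P hP => apIn_subset_asso _ (hTmem P hP)
    have hrad : (∏ P ∈ T, P) ≤ (Submodule.span A {x}).annihilator.radical := by
      intro a ha
      have hmem : ∀ P₀ ∈ apIn (Submodule.span A {x}), a ∈ P₀ := by
        intro P₀ hP₀
        exact (Ideal.prod_le_inf.trans (Finset.inf_le (hfin.mem_toFinset.mpr hP₀))) ha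
      obtain ⟨n, hn⟩ := aux_nilpotent x a hmem
      exact Ideal.mem_radical_iff.mpr
        ⟨n, by rwa [Submodule.mem_annihilator_span_singleton]⟩
    obtain ⟨k, hk⟩ := Ideal.exists_pow_le_of_le_radical_of_fg hrad (IsNoetherian.noetherian _)
    have hprod : (∏ P ∈ T, P ^ (k + 1)) ≤ (Submodule.span A {x}).annihilator := by
      rw [Finset.prod_pow]
      calc (∏ P ∈ T, P) ^ (k + 1) ≤ (∏ P ∈ T, P) ^ k :=
            Ideal.pow_le_pow_right (Nat.le_succ k)
        _ ≤ _ := hk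
    have hpair : (↑T : Set (Ideal A)).Pairwise fun P Q => P ^ (k + 1) ⊔ Q ^ (k + 1) = ⊤ := by
      intro P hP Q hQ hne
      exact hQcop P (hTasso P (Finset.mem_coe.mp hP)) Q (hTasso Q (Finset.mem_coe.mp hQ))
        hne _ _
    have hco := Submodule.iSup_torsionBySet_ideal_eq_torsionBySet_iInf
      (R := A) (M := M) (p := fun P : Ideal A => P ^ (k + 1)) (S := T) hpair
    have hxmem : x ∈ Submodule.torsionBySet A M ↑(⨅ P ∈ T, P ^ (k + 1)) := by
      rw [Submodule.mem_torsionBySet_iff]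
      rintro ⟨a, ha⟩
      rw [inf_eq_prod_of_coprime T _ hpair] at ha
      exact (Submodule.mem_annihilator_span_singleton _ _).mp (hprod ha)
    rw [← hco] at hxmem
    have hle : (⨆ P ∈ T, Submodule.torsionBySet A M ↑(P ^ (k + 1))) ≤
        ⨆ P : associatedPrimes A M, primaryComponent A M (P : Ideal A) := by
      refine iSup₂_le fun P hP => ?_
      have h1 : Submodule.torsionBySet A M ↑(P ^ (k + 1)) ≤ primaryComponent A M P :=
        le_iSup (fun n : ℕ => Submodule.torsionBySet A M ((P ^ (n + 1) : Ideal A) : Set A)) k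
      exact h1.trans
        (le_iSup (fun P : associatedPrimes A M => primaryComponent A M (P : Ideal A))
          ⟨P, hTasso P hP⟩)
    exact hle hxmem
  -- Part 3 : associated primes of the primary components
  refine ⟨hindep, hsup, ?_⟩
  intro P hP
  have hPp : P.IsPrime := hP.1
  ext Q
  simp only [Set.mem_singleton_iff]
  constructor
  · rintro hQ
    obtain ⟨hQp, z, hz⟩ := mem_asso_iff.mp hQ
    have hz' : Q = (Submodule.span A {(z : M)}).annihilator := hz.trans (annSpanCoe z)
    have hQM : Q ∈ associatedPrimes A M := mem_asso_iff.mpr ⟨hQp, (z : M), hz'⟩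
    obtain ⟨m, hm⟩ := mem_primaryComponent_iff.mp z.2
    have hPQ : P ≤ Q := by
      haveI := hQp
      have hpow : P ^ (m + 1) ≤ Q := by
        intro a ha
        rw [hz', Submodule.mem_annihilator_span_singleton]
        exact hm a ha
      exact Ideal.IsPrime.le_of_pow_le hpow
    by_contra hne
    have htop : P ⊔ Q = ⊤ := hdisj P hP Q hQM (fun e => hne e.symm)
    rw [sup_eq_right.mpr hPQ] at htop
    exact hQp.ne_top htop
  · rintro rfl
    obtain ⟨hp, y, hy⟩ := mem_asso_iff.mp hP
    have hymem : y ∈ primaryComponent A M Q := by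
      refine mem_primaryComponent_iff.mpr ⟨0, ?_⟩
      intro a ha
      rw [pow_one] at ha
      exact (Submodule.mem_annihilator_span_singleton y a).mp (hy ▸ ha)
    exact mem_asso_iff.mpr ⟨hp, ⟨y, hymem⟩, by rw [annSpanCoe]; exact hy⟩
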